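/- Let N be a positive integer and ε > 0 with ε < W/(2N²), where W = b − a. Let X be the discrete random variable taking each value x_k = a + kW/N (k = 1, …, N) with probability 1/N. Then every half-open interval I = (a', b'] ⊆ (a, b] with P(X ∈ I) > 1/N satisfies Δ_X(I) > ε. -/

import Mathlib

open MeasureTheory

/-- `μ_{(u,v]} = E[X | X ∈ (u, v]]`. -/
noncomputable def intervalMean {Ω : Type*} [MeasurableSpace Ω]
    (P : Measure Ω) (X : Ω → ℝ) (u v : ℝ) : ℝ :=
  (∫ ω in {ω | X ω ∈ Set.Ioc u v}, X ω ∂P) / (P {ω | X ω ∈ Set.Ioc u v}).toReal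

/-- Per-interval approximation error
`Δ_X((u,v]) = E[1_{u < X ≤ μ_{(u,v]}} (μ_{(u,v]} − X)]`. -/
noncomputable def Delta {Ω : Type*} [MeasurableSpace Ω]
    (P : Measure Ω) (X : Ω → ℝ) (u v : ℝ) : ℝ :=
  ∫ ω in {ω | X ω ∈ Set.Ioc u (intervalMean P X u v)},
    (intervalMean P X u v - X ω) ∂P

lemma myIntegrableDirac {f : ℝ → ℝ} (hf : StronglyMeasurable f) (c : ℝ) :
    Integrable f (Measure.dirac c) := by
  refine ⟨hf.aestronglyMeasurable, ?_⟩
  simp [HasFiniteIntegral, lintegral_dirac]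

lemma myRestrictSum {ι : Type*} (F : Finset ι) (μ : ι → Measure ℝ) (s : Set ℝ) :
    (∑ i ∈ F, μ i).restrict s = ∑ i ∈ F, (μ i).restrict s := by
  classical
  induction F using Finset.induction_on with
  | empty => simp
  | @insert _ _ h ih => simp [Finset.sum_insert h, ih]

lemma myDiscreteIntegral (N : ℕ) (x : ℕ → ℝ) (f : ℝ → ℝ) (hf : StronglyMeasurable f)
    (s : Set ℝ) (hs : MeasurableSet s) [DecidablePred fun k => x k ∈ s] :
    ∫ y in s, f y ∂((1 / (N : ENNReal)) • ∑ k ∈ Finset.Icc 1 N, Measure.dirac (x k))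
      = (∑ k ∈ (Finset.Icc 1 N).filter (fun k => x k ∈ s), f (x k)) / N := by
  rw [Measure.restrict_smul, integral_smul_measure, myRestrictSum]
  rw [integral_finset_sum_measure (fun k _ => by
    rw [restrict_dirac' hs]
    split_ifs
    · exact myIntegrableDirac hf (x k)
    · exact integrable_zero_measure)]
  have h2 : ∀ k ∈ Finset.Icc 1 N, (∫ y, f y ∂(Measure.dirac (x k)).restrict s)
      = if x k ∈ s then f (x k) else 0 := fun k _ => setIntegral_dirac' hf (x k) hs
  rw [Finset.sum_congr rfl h2, ← Finset.sum_filter]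
  have hN1 : ((1 : ENNReal) / N).toReal = 1 / (N:ℝ) := by
    simp [ENNReal.toReal_div]
  rw [hN1, smul_eq_mul, one_div, div_eq_inv_mul]

lemma myDiscreteMeasure (N : ℕ) (x : ℕ → ℝ) (s : Set ℝ) (hs : MeasurableSet s)
    [DecidablePred fun k => x k ∈ s] :
    ((1 / (N : ENNReal)) • ∑ k ∈ Finset.Icc 1 N, Measure.dirac (x k)) s
      = ((Finset.Icc 1 N).filter (fun k => x k ∈ s)).card / N := by
  rw [Measure.smul_apply, Measure.finset_sum_apply]
  have h1 : ∀ k ∈ Finset.Icc 1 N, (Measure.dirac (x k)) s = if x k ∈ s then 1 else 0 := by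
    intro k _
    rw [Measure.dirac_apply' _ hs, Set.indicator_apply]
    split_ifs <;> rfl
  rw [Finset.sum_congr rfl h1, ← Finset.sum_filter, Finset.sum_const, nsmul_eq_mul, mul_one,
    smul_eq_mul, one_div, ENNReal.div_eq_inv_mul]

lemma myMapEq {Ω : Type*} [MeasurableSpace Ω] (P : Measure Ω)
    (Y : Ω → ℝ) (hY : Measurable Y)
    (N : ℕ) (x : ℕ → ℝ) (hinj : Set.InjOn x (Finset.Icc 1 N : Finset ℕ))
    (hval : ∀ᵐ ω ∂P, ∃ k ∈ Finset.Icc 1 N, Y ω = x k)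
    (hprob : ∀ k ∈ Finset.Icc 1 N, P {ω | Y ω = x k} = 1 / (N : ENNReal)) :
    P.map Y = (1 / (N : ENNReal)) • ∑ k ∈ Finset.Icc 1 N, Measure.dirac (x k) := by
  classical
  ext s hs
  rw [Measure.map_apply hY hs, myDiscreteMeasure N x s hs]
  set F := (Finset.Icc 1 N).filter (fun k => x k ∈ s) with hF
  have h1 : Y ⁻¹' s =ᵐ[P] ⋃ k ∈ F, {ω | Y ω = x k} := by
    rw [Filter.eventuallyEq_set]
    filter_upwards [hval] with ω hω
    obtain ⟨k, hk, hYk⟩ := hω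
    constructor
    · intro hωs
      exact Set.mem_biUnion (Finset.mem_filter.2 ⟨hk, hYk ▸ hωs⟩) hYk
    · intro hω'
      obtain ⟨j, hj, hYj⟩ := Set.mem_iUnion₂.1 hω'
      have hxj : x j ∈ s := (Finset.mem_filter.1 hj).2
      have hYxj : Y ω = x j := hYj
      exact Set.mem_preimage.2 (hYxj ▸ hxj)
  have hd : Set.PairwiseDisjoint (F : Set ℕ) (fun k => {ω | Y ω = x k}) := by
    intro i hi j hj hij
    have hxij : x i ≠ x j := fun h => hij (hinj
      (by exact_mod_cast Finset.filter_subset _ _ (by exact_mod_cast hi))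
      (by exact_mod_cast Finset.filter_subset _ _ (by exact_mod_cast hj)) h)
    simp only [Set.disjoint_left]
    intro ω h1' h2'
    exact hxij ((Set.mem_setOf_eq ▸ h1').symm.trans h2')
  have hm : ∀ k ∈ F, MeasurableSet {ω | Y ω = x k} :=
    fun k _ => hY (measurableSet_singleton (x k))
  rw [measure_congr h1, measure_biUnion_finset hd hm]
  have h3 : ∀ k ∈ F, P {ω | Y ω = x k} = 1 / (N : ENNReal) := fun k hk =>
    hprob k (Finset.mem_filter.1 hk).1
  rw [Finset.sum_congr rfl h3, Finset.sum_const, nsmul_eq_mul, one_div, ← div_eq_mul_inv]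

/-- Let `N ≥ 1`, `0 < ε < W/(2N²)` with `W = b − a`, and let `X` be
the discrete random variable taking each value `x_k = a + k W/N` (`k = 1,…,N`) with
probability `1/N`. Then every half-open interval `I = (a', b'] ⊆ (a, b]` with
`P(X ∈ I) > 1/N` satisfies `Δ_X(I) > ε`. -/
theorem lower_bound_discrete_interval {Ω : Type*} [MeasurableSpace Ω]
    (P : Measure Ω) [IsProbabilityMeasure P]
    (X : Ω → ℝ) (hX : Integrable X P)
    (a b : ℝ) (hab : a < b)
    (N : ℕ) (hN : 0 < N)
    (ε : ℝ) (hε : 0 < ε) (hεW : ε < (b - a) / (2 * (N : ℝ) ^ 2))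
    (hval : ∀ ω, ∃ k ∈ Finset.Icc 1 N, X ω = a + (k : ℝ) * (b - a) / N)
    (hprob : ∀ k ∈ Finset.Icc 1 N,
      P {ω | X ω = a + (k : ℝ) * (b - a) / N} = 1 / (N : ENNReal)) :
    ∀ a' b' : ℝ, a ≤ a' → b' ≤ b →
      1 / (N : ℝ) < (P {ω | X ω ∈ Set.Ioc a' b'}).toReal →
      ε < Delta P X a' b' := by
  classical
  intro a' b' ha' hb' hPI
  have hNR : (0:ℝ) < N := Nat.cast_pos.2 hN
  have hW : (0:ℝ) < b - a := sub_pos.2 hab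
  set x : ℕ → ℝ := fun k => a + (k : ℝ) * (b - a) / N with hxdef
  have hxmono : StrictMono x := by
    intro i j hij
    have hij' : (i:ℝ) < j := by exact_mod_cast hij
    have h2 : (i:ℝ) * (b-a) < (j:ℝ) * (b-a) := by nlinarith
    exact add_lt_add_right ((div_lt_div_iff_of_pos_right hNR).2 h2) a
  -- measurable version of X
  have hsm := hX.1
  set Y := hsm.mk X with hYdef
  have hYm : Measurable Y := hsm.stronglyMeasurable_mk.measurable
  have hXY : X =ᵐ[P] Y := hsm.ae_eq_mk
  have hinj : Set.InjOn x (Finset.Icc 1 N : Finset ℕ) :=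
    fun i _ j _ h => hxmono.injective h
  have hvalY : ∀ᵐ ω ∂P, ∃ k ∈ Finset.Icc 1 N, Y ω = x k := by
    filter_upwards [hXY] with ω h
    obtain ⟨k, hk, hXk⟩ := hval ω
    exact ⟨k, hk, h ▸ hXk⟩
  have hprobY : ∀ k ∈ Finset.Icc 1 N, P {ω | Y ω = x k} = 1 / (N : ENNReal) := by
    intro k hk
    have hs : {ω | Y ω = x k} =ᵐ[P] {ω | X ω = x k} := by
      rw [Filter.eventuallyEq_set]
      filter_upwards [hXY] with ω h
      simp only [Set.mem_setOf_eq, h]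
    rw [measure_congr hs]
    exact hprob k hk
  have hmap : P.map Y = (1 / (N : ENNReal)) • ∑ k ∈ Finset.Icc 1 N, Measure.dirac (x k) :=
    myMapEq P Y hYm N x hinj hvalY hprobY
  have hset : ∀ s : Set ℝ, {ω | X ω ∈ s} =ᵐ[P] Y ⁻¹' s := by
    intro s
    rw [Filter.eventuallyEq_set]
    filter_upwards [hXY] with ω h
    simp only [Set.mem_setOf_eq, Set.mem_preimage, h]
  have hPs : ∀ u v : ℝ,
      (P {ω | X ω ∈ Set.Ioc u v}).toReal
        = (((Finset.Icc 1 N).filter (fun k => x k ∈ Set.Ioc u v)).card : ℝ) / N := by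
    intro u v
    rw [measure_congr (hset _), ← Measure.map_apply hYm measurableSet_Ioc, hmap,
      myDiscreteMeasure N x _ measurableSet_Ioc]
    simp [ENNReal.toReal_div]
  have hIs : ∀ (f : ℝ → ℝ), Continuous f → ∀ u v : ℝ,
      ∫ ω in {ω | X ω ∈ Set.Ioc u v}, f (X ω) ∂P
        = (∑ k ∈ (Finset.Icc 1 N).filter (fun k => x k ∈ Set.Ioc u v), f (x k)) / N := by
    intro f hf u v
    rw [setIntegral_congr_set (hset _)]
    have h2 : (fun ω => f (X ω)) =ᵐ[P.restrict (Y ⁻¹' Set.Ioc u v)] fun ω => f (Y ω) :=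
      ae_restrict_of_ae (hXY.mono fun ω h => by simp only [h])
    rw [integral_congr_ae h2,
      ← setIntegral_map measurableSet_Ioc hf.aestronglyMeasurable hYm.aemeasurable,
      hmap, myDiscreteIntegral N x f hf.stronglyMeasurable _ measurableSet_Ioc]
  -- the combinatorial part
  set K := (Finset.Icc 1 N).filter (fun k => x k ∈ Set.Ioc a' b') with hKdef
  have hK1 : (P {ω | X ω ∈ Set.Ioc a' b'}).toReal = (K.card : ℝ) / N := by
    rw [hPs a' b', ← hKdef]
  have hcard2 : 2 ≤ K.card := by
    rw [hK1] at hPI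
    have h1 : (1:ℝ) < K.card := (div_lt_div_iff_of_pos_right hNR).1 hPI
    exact_mod_cast h1
  have hKne : K.Nonempty := Finset.card_pos.1 (by omega)
  set p := K.min' hKne with hpdef
  set q := K.max' hKne with hqdef
  have hpK : p ∈ K := K.min'_mem hKne
  have hqK : q ∈ K := K.max'_mem hKne
  have hpq : p < q := Finset.min'_lt_max'_of_card K (by omega)
  have hp1 : 1 ≤ p := (Finset.mem_Icc.1 (Finset.mem_filter.1 hpK).1).1
  have hqN : q ≤ N := (Finset.mem_Icc.1 (Finset.mem_filter.1 hqK).1).2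
  have ha'p : a' < x p := (Finset.mem_filter.1 hpK).2.1
  have hqb' : x q ≤ b' := (Finset.mem_filter.1 hqK).2.2
  have hKIcc : K = Finset.Icc p q := by
    ext k
    constructor
    · intro hk
      exact Finset.mem_Icc.2 ⟨K.min'_le k hk, K.le_max' k hk⟩
    · intro hk
      obtain ⟨hpk, hkq⟩ := Finset.mem_Icc.1 hk
      refine Finset.mem_filter.2 ⟨Finset.mem_Icc.2 ⟨le_trans hp1 hpk, le_trans hkq hqN⟩,
        lt_of_lt_of_le ha'p (hxmono.monotone hpk), le_trans (hxmono.monotone hkq) hqb'⟩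
  -- Gauss sum
  have hc1 : (↑(q + 1 - p) : ℝ) = (q:ℝ) + 1 - p := by
    rw [Nat.cast_sub (by omega)]
    push_cast
    ring
  have hsumk : ∑ k ∈ Finset.Icc p q, (k:ℝ) = (((p:ℝ)+q)*((q:ℝ)+1-p))/2 := by
    rw [← Finset.Ico_add_one_right_eq_Icc, Finset.sum_Ico_eq_sum_range]
    set m := q + 1 - p with hmdef
    have hm1 : 1 ≤ m := by omega
    have hmc : (m:ℝ) = (q:ℝ) + 1 - p := hc1
    have hg : (∑ i ∈ Finset.range m, (i:ℝ)) = (m:ℝ) * ((m:ℝ) - 1) / 2 := by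
      have h1 := Finset.sum_range_id_mul_two m
      have h3 : (((∑ i ∈ Finset.range m, i) * 2 : ℕ) : ℝ) = ((m * (m-1) : ℕ) : ℝ) := by
        rw [h1]
      push_cast [Nat.cast_sub hm1] at h3
      linarith
    simp only [Nat.cast_add]
    rw [Finset.sum_add_distrib, Finset.sum_const, Finset.card_range, nsmul_eq_mul, hg]
    rw [hmc]
    ring
  -- the interval mean
  have hμ : intervalMean P X a' b' = a + (((p:ℝ)+q)/2) * (b-a) / N := by
    rw [intervalMean, hK1]
    have hI := hIs id continuous_id a' b'
    simp only [id] at hI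
    rw [hI, ← hKdef, hKIcc, Nat.card_Icc]
    have hsx : ∑ k ∈ Finset.Icc p q, x k
        = ((q:ℝ)+1-p) * a + ((((p:ℝ)+q)*((q:ℝ)+1-p))/2) * (b-a) / N := by
      simp only [hxdef]
      rw [Finset.sum_add_distrib, Finset.sum_const, Nat.card_Icc, nsmul_eq_mul, hc1,
        ← Finset.sum_div, ← Finset.sum_mul, hsumk]
    rw [hsx, hc1]
    have hc0 : (0:ℝ) < (q:ℝ) + 1 - p := by
      have : (p:ℝ) < q := by exact_mod_cast hpq
      linarith
    field_simp
  -- bridging nat and real inequalities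
  have hxle : ∀ k : ℕ, x k ≤ a + (((p:ℝ)+q)/2) * (b-a) / N ↔ 2 * k ≤ p + q := by
    intro k
    simp only [hxdef]
    rw [add_le_add_iff_left, div_le_div_iff_of_pos_right hNR, mul_le_mul_iff_of_pos_right hW]
    rw [le_div_iff₀ (by norm_num : (0:ℝ) < 2)]
    constructor
    · intro h
      have h' : ((2 * k : ℕ) : ℝ) ≤ ((p + q : ℕ) : ℝ) := by push_cast; linarith
      exact_mod_cast h'
    · intro h
      have h' : ((2 * k : ℕ) : ℝ) ≤ ((p + q : ℕ) : ℝ) := by exact_mod_cast h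
      push_cast at h'
      linarith
  have hxge : ∀ k : ℕ, a + (((p:ℝ)+q)/2) * (b-a) / N ≤ x k ↔ p + q ≤ 2 * k := by
    intro k
    simp only [hxdef]
    rw [add_le_add_iff_left, div_le_div_iff_of_pos_right hNR, mul_le_mul_iff_of_pos_right hW]
    rw [div_le_iff₀ (by norm_num : (0:ℝ) < 2)]
    constructor
    · intro h
      have h' : ((p + q : ℕ) : ℝ) ≤ ((2 * k : ℕ) : ℝ) := by push_cast; linarith
      exact_mod_cast h'
    · intro h
      have h' : ((p + q : ℕ) : ℝ) ≤ ((2 * k : ℕ) : ℝ) := by exact_mod_cast h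
      push_cast at h'
      linarith
  set t := (p + q) / 2 with htdef
  have hpt : p ≤ t := by omega
  have htq : t ≤ q := by omega
  have hK2 : (Finset.Icc 1 N).filter
      (fun k => x k ∈ Set.Ioc a' (a + (((p:ℝ)+q)/2) * (b-a) / N)) = Finset.Icc p t := by
    ext k
    simp only [Finset.mem_filter, Finset.mem_Icc, Set.mem_Ioc]
    constructor
    · rintro ⟨⟨h1k, hkN⟩, ha'k, hkμ⟩
      have h2k : 2*k ≤ p + q := (hxle k).1 hkμ
      have hμxq : a + (((p:ℝ)+q)/2) * (b-a) / N ≤ x q := (hxge q).2 (by omega)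
      have hkK : k ∈ K := by
        rw [hKdef]
        exact Finset.mem_filter.2 ⟨Finset.mem_Icc.2 ⟨h1k, hkN⟩, ha'k,
          le_trans hkμ (le_trans hμxq hqb')⟩
      have hpk : p ≤ k := by
        rw [hKIcc] at hkK
        exact (Finset.mem_Icc.1 hkK).1
      exact ⟨hpk, by omega⟩
    · rintro ⟨hpk, hkt⟩
      exact ⟨⟨by omega, by omega⟩, lt_of_lt_of_le ha'p (hxmono.monotone hpk),
        (hxle k).2 (by omega)⟩
  have hD : Delta P X a' b'
      = (∑ k ∈ Finset.Icc p t, ((a + (((p:ℝ)+q)/2) * (b-a) / N) - x k)) / N := by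
    rw [Delta, hμ]
    have hI := hIs (fun y => (a + (((p:ℝ)+q)/2) * (b-a) / N) - y)
      (continuous_const.sub continuous_id) a' (a + (((p:ℝ)+q)/2) * (b-a) / N)
    rw [hI, hK2]
  have hterm : ∀ k ∈ Finset.Icc p t, 0 ≤ (a + (((p:ℝ)+q)/2) * (b-a) / N) - x k := by
    intro k hk
    obtain ⟨hpk, hkt⟩ := Finset.mem_Icc.1 hk
    have := (hxle k).2 (by omega)
    linarith
  have hsingle : (a + (((p:ℝ)+q)/2) * (b-a) / N) - x p
      ≤ ∑ k ∈ Finset.Icc p t, ((a + (((p:ℝ)+q)/2) * (b-a) / N) - x k) :=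
    Finset.single_le_sum hterm (Finset.mem_Icc.2 ⟨le_refl p, hpt⟩)
  have hgap : (b - a) / (2*N) ≤ (a + (((p:ℝ)+q)/2) * (b-a) / N) - x p := by
    have hq1 : (p:ℝ) + 1 ≤ q := by exact_mod_cast hpq
    have h0 : (0:ℝ) < (b-a)/N := div_pos hW hNR
    have he1 : a + (((p:ℝ)+q)/2) * (b-a) / N - x p = (((q:ℝ)-p)/2) * ((b-a)/N) := by
      simp only [hxdef]
      ring
    have he2 : (b-a)/(2*(N:ℝ)) = (1/2) * ((b-a)/N) := by ring
    rw [he1, he2]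
    nlinarith [h0]
  have hfinal : (b - a) / (2 * (N:ℝ)^2) ≤ Delta P X a' b' := by
    rw [hD]
    calc (b-a)/(2*(N:ℝ)^2) = ((b-a)/(2*(N:ℝ)))/N := by ring
    _ ≤ _ := (div_le_div_iff_of_pos_right hNR).2 (le_trans hgap hsingle)
  exact lt_of_lt_of_le hεW hfinal
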